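/- arXiv:1708.07815 — 9 statements merged into one kernel-verified Lean document; each statement's English description precedes it below -/
import Mathlib

section
/- Let ψ ∈ V be a regular solution, i.e. N(ψ) = 0 and the linearized form DN(ψ) satisfies the inf-sup condition with constant β > 0. Then every w ∈ V satisfies the residual estimate β·‖ψ − w‖ ≤ sup_{φ∈V, ‖φ‖≤1} |N(w)(φ)| + C_b·‖ψ − w‖². -/
/-- If `ψ` is a regular solution (`N(ψ) = 0` and `DN(ψ)` satisfies the
inf-sup condition with constant `β > 0`), then every `w ∈ V` satisfies the residual
estimate `β·‖ψ − w‖ ≤ sup_{‖φ‖≤1} |N(w)(φ)| + C_b·‖ψ − w‖²`. -/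
theorem residual_estimate_of_regular_solution
    {V : Type*} [NormedAddCommGroup V] [NormedSpace ℝ V]
    (A : V →ₗ[ℝ] V →ₗ[ℝ] ℝ) (B : V →ₗ[ℝ] V →ₗ[ℝ] V →ₗ[ℝ] ℝ) (L : V →ₗ[ℝ] ℝ)
    (C_A C_b C_L : ℝ) (hCb : 0 < C_b)
    (hA : ∀ x y : V, |A x y| ≤ C_A * ‖x‖ * ‖y‖)
    (hBsymm : ∀ x y z : V, B x y z = B y x z)
    (hB : ∀ x y z : V, |B x y z| ≤ C_b * ‖x‖ * ‖y‖ * ‖z‖)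
    (hL : ∀ x : V, |L x| ≤ C_L * ‖x‖)
    (ψ : V) (β : ℝ) (hβ : 0 < β)
    (hsol : ∀ φ : V, A ψ φ + B ψ ψ φ - L φ = 0)
    (hinfsup : ∀ θ : V, β * ‖θ‖ ≤
      ⨆ φ : {φ : V // ‖φ‖ ≤ 1}, (A θ (φ : V) + 2 * B ψ θ (φ : V))) :
    ∀ w : V, β * ‖ψ - w‖ ≤
      (⨆ φ : {φ : V // ‖φ‖ ≤ 1}, |A w (φ : V) + B w w (φ : V) - L (φ : V)|)
        + C_b * ‖ψ - w‖ ^ 2 := by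
  intro w
  have hne : Nonempty {φ : V // ‖φ‖ ≤ 1} := ⟨⟨0, by simp⟩⟩
  have hbdd : BddAbove (Set.range fun φ : {φ : V // ‖φ‖ ≤ 1} =>
      |A w (φ : V) + B w w (φ : V) - L (φ : V)|) := by
    refine ⟨|C_A| * ‖w‖ + |C_b| * (‖w‖ * ‖w‖) + |C_L|, ?_⟩
    rintro x ⟨⟨φ, hφ⟩, rfl⟩
    have h1 := hA w φ
    have h2 := hB w w φ
    have h3 := hL φ
    have hφ0 : 0 ≤ ‖φ‖ := norm_nonneg _
    have hw0 : 0 ≤ ‖w‖ := norm_nonneg _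
    have habs : |A w φ + B w w φ - L φ| ≤ |A w φ| + |B w w φ| + |L φ| := by
      have := abs_add_le (A w φ + B w w φ) (-(L φ))
      have := abs_add_le (A w φ) (B w w φ)
      simp only [abs_neg] at *
      calc |A w φ + B w w φ - L φ| = |(A w φ + B w w φ) + (-(L φ))| := by ring_nf
        _ ≤ |A w φ + B w w φ| + |L φ| := by
            simpa [abs_neg] using abs_add_le (A w φ + B w w φ) (-(L φ))
        _ ≤ |A w φ| + |B w w φ| + |L φ| := by linarith [abs_add_le (A w φ) (B w w φ)]
    have e1 : C_A * ‖w‖ * ‖φ‖ ≤ |C_A| * ‖w‖ := by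
      nlinarith [mul_nonneg (mul_nonneg (sub_nonneg.2 (le_abs_self C_A)) hw0) hφ0,
        mul_nonneg (mul_nonneg (abs_nonneg C_A) hw0) (sub_nonneg.2 hφ)]
    have e2 : C_b * ‖w‖ * ‖w‖ * ‖φ‖ ≤ |C_b| * (‖w‖ * ‖w‖) := by
      nlinarith [mul_nonneg (mul_nonneg (mul_nonneg (sub_nonneg.2 (le_abs_self C_b)) hw0) hw0) hφ0,
        mul_nonneg (mul_nonneg (mul_nonneg (abs_nonneg C_b) hw0) hw0) (sub_nonneg.2 hφ)]
    have e3 : C_L * ‖φ‖ ≤ |C_L| :=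
      by nlinarith [le_abs_self C_L, abs_nonneg C_L]
    simp only
    linarith
  have hmain : ∀ φ : {φ : V // ‖φ‖ ≤ 1},
      A (ψ - w) (φ : V) + 2 * B ψ (ψ - w) (φ : V) ≤
        (⨆ φ : {φ : V // ‖φ‖ ≤ 1}, |A w (φ : V) + B w w (φ : V) - L (φ : V)|)
          + C_b * ‖ψ - w‖ ^ 2 := by
    rintro ⟨φ, hφ⟩
    have hs := hsol φ
    have h1 : B w ψ φ = B ψ w φ := hBsymm w ψ φ
    have hexp : A (ψ - w) φ + 2 * B ψ (ψ - w) φ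
        = -(A w φ + B w w φ - L φ) + B (ψ - w) (ψ - w) φ := by
      simp only [map_sub, LinearMap.sub_apply]
      linarith
    have hBb := hB (ψ - w) (ψ - w) φ
    have hθ0 : 0 ≤ ‖ψ - w‖ := norm_nonneg _
    have hφ0 : 0 ≤ ‖φ‖ := norm_nonneg _
    have hB2 : B (ψ - w) (ψ - w) φ ≤ C_b * ‖ψ - w‖ ^ 2 := by
      have hle := le_abs_self (B (ψ - w) (ψ - w) φ)
      have hsq : ‖ψ - w‖ ^ 2 = ‖ψ - w‖ * ‖ψ - w‖ := sq ‖ψ - w‖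
      nlinarith [mul_nonneg (mul_nonneg (mul_nonneg hCb.le hθ0) hθ0) (sub_nonneg.2 hφ)]
    have hN : -(A w φ + B w w φ - L φ) ≤
        ⨆ φ : {φ : V // ‖φ‖ ≤ 1}, |A w (φ : V) + B w w (φ : V) - L (φ : V)| := by
      have := le_ciSup hbdd ⟨φ, hφ⟩
      simp only at this
      have h := neg_abs_le (A w φ + B w w φ - L φ)
      linarith
    linarith
  calc β * ‖ψ - w‖ ≤ ⨆ φ : {φ : V // ‖φ‖ ≤ 1},
        (A (ψ - w) (φ : V) + 2 * B ψ (ψ - w) (φ : V)) := hinfsup (ψ - w)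
    _ ≤ _ := ciSup_le hmain
end

section
/- Let ψ ∈ V satisfy N(ψ) = 0 and suppose DN(ψ) satisfies the inf-sup condition with constant β > 0. If w ∈ V satisfies 2·C_b·‖ψ − w‖ ≤ β, then the reliability bound ‖ψ − w‖ ≤ (2/β)·sup_{φ∈V, ‖φ‖≤1} |N(w)(φ)| holds, i.e. the error is controlled by the dual norm of the residual. -/
/-- If `ψ` is a regular solution (`N(ψ) = 0`, inf-sup constant `β > 0` for
`DN(ψ)`) and `w ∈ V` satisfies `2·C_b·‖ψ − w‖ ≤ β`, then the reliability bound
`‖ψ − w‖ ≤ (2/β)·sup_{‖φ‖≤1} |N(w)(φ)|` holds. -/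
theorem reliability_bound_of_regular_solution
    {V : Type*} [NormedAddCommGroup V] [NormedSpace ℝ V]
    (A : V →ₗ[ℝ] V →ₗ[ℝ] ℝ) (B : V →ₗ[ℝ] V →ₗ[ℝ] V →ₗ[ℝ] ℝ) (L : V →ₗ[ℝ] ℝ)
    (C_A C_b C_L : ℝ) (hCb : 0 < C_b)
    (hA : ∀ x y : V, |A x y| ≤ C_A * ‖x‖ * ‖y‖)
    (hBsymm : ∀ x y z : V, B x y z = B y x z)
    (hB : ∀ x y z : V, |B x y z| ≤ C_b * ‖x‖ * ‖y‖ * ‖z‖)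
    (hL : ∀ x : V, |L x| ≤ C_L * ‖x‖)
    (ψ : V) (β : ℝ) (hβ : 0 < β)
    (hsol : ∀ φ : V, A ψ φ + B ψ ψ φ - L φ = 0)
    (hinfsup : ∀ θ : V, β * ‖θ‖ ≤
      ⨆ φ : {φ : V // ‖φ‖ ≤ 1}, (A θ (φ : V) + 2 * B ψ θ (φ : V)))
    (w : V) (hw : 2 * C_b * ‖ψ - w‖ ≤ β) :
    ‖ψ - w‖ ≤ (2 / β) *
      ⨆ φ : {φ : V // ‖φ‖ ≤ 1}, |A w (φ : V) + B w w (φ : V) - L (φ : V)| := by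
  set e := ψ - w with he
  haveI : Nonempty {φ : V // ‖φ‖ ≤ 1} := ⟨⟨0, by simp⟩⟩
  have hbdd : BddAbove (Set.range fun φ : {φ : V // ‖φ‖ ≤ 1} =>
      |A w (φ : V) + B w w (φ : V) - L (φ : V)|) := by
    refine ⟨|C_A| * ‖w‖ + C_b * ‖w‖ * ‖w‖ + |C_L|, ?_⟩
    rintro x ⟨φ, rfl⟩
    have hφ := φ.2
    have hφ0 : (0:ℝ) ≤ ‖(φ : V)‖ := norm_nonneg _
    have hw0 : (0:ℝ) ≤ ‖w‖ := norm_nonneg _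
    have habs : |A w (φ:V) + B w w (φ:V) - L (φ:V)|
        ≤ |A w (φ:V)| + |B w w (φ:V)| + |L (φ:V)| := by
      rw [sub_eq_add_neg]
      refine (abs_add_le _ _).trans ?_
      rw [abs_neg]
      exact add_le_add (abs_add_le _ _) le_rfl
    have h2 := hA w (φ:V)
    have h3 := hB w w (φ:V)
    have h4 := hL (φ:V)
    nlinarith [mul_le_mul_of_nonneg_right (le_abs_self C_A) (mul_nonneg hw0 hφ0),
      mul_le_mul_of_nonneg_right (le_abs_self C_L) hφ0,
      mul_le_mul_of_nonneg_left hφ (abs_nonneg C_L),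
      mul_le_mul_of_nonneg_left hφ (mul_nonneg (abs_nonneg C_A) hw0),
      mul_le_mul_of_nonneg_left hφ (mul_nonneg (mul_nonneg hCb.le hw0) hw0)]
  set S := ⨆ φ : {φ : V // ‖φ‖ ≤ 1}, |A w (φ : V) + B w w (φ : V) - L (φ : V)| with hS
  have key : ∀ φ : {φ : V // ‖φ‖ ≤ 1},
      A e (φ : V) + 2 * B ψ e (φ : V) ≤ S + C_b * ‖e‖ * ‖e‖ := by
    intro φ
    have hid : A e (φ:V) + 2 * B ψ e (φ:V)
        = -(A w (φ:V) + B w w (φ:V) - L (φ:V)) + B e e (φ:V) := by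
      have hs := hBsymm ψ w (φ:V)
      have h0 := hsol (φ:V)
      simp only [he, map_sub, LinearMap.sub_apply]
      linarith
    have h1 : -(A w (φ:V) + B w w (φ:V) - L (φ:V)) ≤ |A w (φ:V) + B w w (φ:V) - L (φ:V)| :=
      neg_le_abs _
    have h2 : |A w (φ:V) + B w w (φ:V) - L (φ:V)| ≤ S := le_ciSup hbdd φ
    have h3 : B e e (φ:V) ≤ C_b * ‖e‖ * ‖e‖ := by
      have := hB e e (φ:V)
      have hφ := φ.2
      have := le_abs_self (B e e (φ:V))
      nlinarith [norm_nonneg e, norm_nonneg (φ:V), mul_nonneg (mul_nonneg hCb.le (norm_nonneg e)) (norm_nonneg e)]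
    linarith
  have hsup : (⨆ φ : {φ : V // ‖φ‖ ≤ 1}, (A e (φ : V) + 2 * B ψ e (φ : V)))
      ≤ S + C_b * ‖e‖ * ‖e‖ := ciSup_le key
  have hmain : β * ‖e‖ ≤ S + C_b * ‖e‖ * ‖e‖ := (hinfsup e).trans hsup
  rw [div_mul_eq_mul_div, le_div_iff₀ hβ]
  nlinarith [mul_le_mul_of_nonneg_right hw (norm_nonneg e), norm_nonneg e]
end

section
/- Regular solutions are locally unique: if ψ ∈ V is a regular solution (N(ψ) = 0 and DN(ψ) satisfies the inf-sup condition with constant β > 0) and w ∈ V is any other solution, N(w) = 0, with C_b·‖ψ − w‖ < β, then w = ψ. -/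
/-- Regular solutions are locally unique: if `ψ` is a regular solution
(`N(ψ) = 0`, inf-sup constant `β > 0` for `DN(ψ)`) and `w` is any other solution
(`N(w) = 0`) with `C_b·‖ψ − w‖ < β`, then `w = ψ`. -/
theorem regular_solutions_locally_unique
    {V : Type*} [NormedAddCommGroup V] [NormedSpace ℝ V]
    (A : V →ₗ[ℝ] V →ₗ[ℝ] ℝ) (B : V →ₗ[ℝ] V →ₗ[ℝ] V →ₗ[ℝ] ℝ) (L : V →ₗ[ℝ] ℝ)
    (C_A C_b C_L : ℝ) (hCb : 0 < C_b)
    (hA : ∀ x y : V, |A x y| ≤ C_A * ‖x‖ * ‖y‖)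
    (hBsymm : ∀ x y z : V, B x y z = B y x z)
    (hB : ∀ x y z : V, |B x y z| ≤ C_b * ‖x‖ * ‖y‖ * ‖z‖)
    (hL : ∀ x : V, |L x| ≤ C_L * ‖x‖)
    (ψ : V) (β : ℝ) (hβ : 0 < β)
    (hsol : ∀ φ : V, A ψ φ + B ψ ψ φ - L φ = 0)
    (hinfsup : ∀ θ : V, β * ‖θ‖ ≤
      ⨆ φ : {φ : V // ‖φ‖ ≤ 1}, (A θ (φ : V) + 2 * B ψ θ (φ : V)))
    (w : V) (hwsol : ∀ φ : V, A w φ + B w w φ - L φ = 0)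
    (hclose : C_b * ‖ψ - w‖ < β) :
    w = ψ := by
  set e := ψ - w with he
  have key : ∀ φ : V, A e φ + 2 * B ψ e φ = B e e φ := by
    intro φ
    have h1 := hsol φ
    have h2 := hwsol φ
    have hsym := hBsymm w ψ φ
    simp only [he, map_sub, LinearMap.sub_apply]
    nlinarith [h1, h2, hsym]
  have hne : Nonempty {φ : V // ‖φ‖ ≤ 1} := ⟨⟨0, by simp⟩⟩
  have hsup : (⨆ φ : {φ : V // ‖φ‖ ≤ 1}, (A e (φ : V) + 2 * B ψ e (φ : V)))
      ≤ C_b * ‖e‖ * ‖e‖ := by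
    apply ciSup_le
    intro ⟨φ, hφ⟩
    rw [key φ]
    calc B e e φ ≤ |B e e φ| := le_abs_self _
      _ ≤ C_b * ‖e‖ * ‖e‖ * ‖φ‖ := hB e e φ
      _ ≤ C_b * ‖e‖ * ‖e‖ * 1 := by
          apply mul_le_mul_of_nonneg_left hφ
          positivity
      _ = C_b * ‖e‖ * ‖e‖ := by ring
  have hmain : β * ‖e‖ ≤ C_b * ‖e‖ * ‖e‖ := (hinfsup e).trans hsup
  have hz : ‖e‖ = 0 := by
    by_contra h
    have hpos : 0 < ‖e‖ := lt_of_le_of_ne (norm_nonneg _) (Ne.symm h)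
    nlinarith
  have : e = 0 := norm_eq_zero.mp hz
  have : ψ = w := sub_eq_zero.mp this
  exact this.symm
end

section
/- Residual estimate for the fixed-point map: let x ∈ V, suppose the bilinear form Ã : (θ,φ) ↦ A(θ,φ) + 2B(x,θ,φ) satisfies the inf-sup condition with constant γ > 0, and set ε := sup_{φ∈V, ‖φ‖≤1} |A(x,φ) + B(x,x,φ) − L(φ)|. For Θ ∈ V let μ(Θ) ∈ V be any element satisfying Ã(μ(Θ),φ) = L(φ) + 2B(x,Θ,φ) − B(Θ,Θ,φ) for all φ ∈ V. Then γ·‖μ(Θ) − x‖ ≤ ε + C_b·‖Θ − x‖². -/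
/-- Residual estimate for the fixed-point map: if
`Ã(θ,φ) = A(θ,φ) + 2B(x,θ,φ)` satisfies the inf-sup condition with constant `γ > 0`,
`ε = sup_{‖φ‖≤1} |A(x,φ) + B(x,x,φ) − L(φ)|`, and `μΘ` satisfies
`Ã(μΘ,φ) = L(φ) + 2B(x,Θ,φ) − B(Θ,Θ,φ)` for all `φ`, then
`γ·‖μΘ − x‖ ≤ ε + C_b·‖Θ − x‖²`. -/
theorem residual_estimate_fixed_point_map
    {V : Type*} [NormedAddCommGroup V] [NormedSpace ℝ V]
    (A : V →ₗ[ℝ] V →ₗ[ℝ] ℝ) (B : V →ₗ[ℝ] V →ₗ[ℝ] V →ₗ[ℝ] ℝ) (L : V →ₗ[ℝ] ℝ)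
    (C_A C_b C_L : ℝ) (hCb : 0 < C_b)
    (hA : ∀ x y : V, |A x y| ≤ C_A * ‖x‖ * ‖y‖)
    (hBsymm : ∀ x y z : V, B x y z = B y x z)
    (hB : ∀ x y z : V, |B x y z| ≤ C_b * ‖x‖ * ‖y‖ * ‖z‖)
    (hL : ∀ x : V, |L x| ≤ C_L * ‖x‖)
    (x : V) (γ : ℝ) (hγ : 0 < γ)
    (hinfsup : ∀ θ : V, γ * ‖θ‖ ≤
      ⨆ φ : {φ : V // ‖φ‖ ≤ 1}, (A θ (φ : V) + 2 * B x θ (φ : V)))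
    (ε : ℝ)
    (hε : ε = ⨆ φ : {φ : V // ‖φ‖ ≤ 1},
      |A x (φ : V) + B x x (φ : V) - L (φ : V)|)
    (Θ μΘ : V)
    (hμ : ∀ φ : V, A μΘ φ + 2 * B x μΘ φ = L φ + 2 * B x Θ φ - B Θ Θ φ) :
    γ * ‖μΘ - x‖ ≤ ε + C_b * ‖Θ - x‖ ^ 2 := by

  have hne : Nonempty {φ : V // ‖φ‖ ≤ 1} := ⟨⟨0, by simp⟩⟩
  have hbdd : BddAbove (Set.range fun φ : {φ : V // ‖φ‖ ≤ 1} =>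
      |A x (φ : V) + B x x (φ : V) - L (φ : V)|) := by
    refine ⟨|C_A| * ‖x‖ + C_b * ‖x‖ * ‖x‖ + |C_L|, ?_⟩
    rintro _ ⟨⟨φ, hφ⟩, rfl⟩
    show |A x φ + B x x φ - L φ| ≤ _
    have h1 : |A x φ| ≤ |C_A| * ‖x‖ := by
      calc |A x φ| ≤ C_A * ‖x‖ * ‖φ‖ := hA x φ
        _ ≤ |C_A * ‖x‖ * ‖φ‖| := le_abs_self _
        _ = |C_A| * ‖x‖ * ‖φ‖ := by rw [abs_mul, abs_mul, abs_norm, abs_norm]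
        _ ≤ |C_A| * ‖x‖ * 1 := by gcongr
        _ = |C_A| * ‖x‖ := by ring
    have h2 : |B x x φ| ≤ C_b * ‖x‖ * ‖x‖ := by
      calc |B x x φ| ≤ C_b * ‖x‖ * ‖x‖ * ‖φ‖ := hB x x φ
        _ ≤ C_b * ‖x‖ * ‖x‖ * 1 := by gcongr
        _ = C_b * ‖x‖ * ‖x‖ := by ring
    have h3 : |L φ| ≤ |C_L| := by
      calc |L φ| ≤ C_L * ‖φ‖ := hL φ
        _ ≤ |C_L * ‖φ‖| := le_abs_self _
        _ = |C_L| * ‖φ‖ := by rw [abs_mul, abs_norm]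
        _ ≤ |C_L| * 1 := by gcongr
        _ = |C_L| := by ring
    have : |A x φ + B x x φ - L φ| ≤ |A x φ| + |B x x φ| + |L φ| := by
      calc |A x φ + B x x φ - L φ| ≤ |A x φ + B x x φ| + |L φ| := abs_sub _ _
        _ ≤ |A x φ| + |B x x φ| + |L φ| := by
            gcongr; exact abs_add_le _ _
    linarith
  calc γ * ‖μΘ - x‖ ≤ ⨆ φ : {φ : V // ‖φ‖ ≤ 1},
        (A (μΘ - x) (φ : V) + 2 * B x (μΘ - x) (φ : V)) := hinfsup _
    _ ≤ ε + C_b * ‖Θ - x‖ ^ 2 := by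
        refine ciSup_le ?_
        rintro ⟨φ, hφ⟩
        have key : A (μΘ - x) φ + 2 * B x (μΘ - x) φ
            = -(A x φ + B x x φ - L φ) - B (Θ - x) (Θ - x) φ := by
          have h := hμ φ
          have hs1 : B Θ x φ = B x Θ φ := hBsymm Θ x φ
          simp only [map_sub, LinearMap.sub_apply] at *
          linarith
        have h1 : -(A x φ + B x x φ - L φ) ≤ |A x φ + B x x φ - L φ| := neg_le_abs _
        have h2 : -B (Θ - x) (Θ - x) φ ≤ C_b * ‖Θ - x‖ ^ 2 := by
          have hb := abs_le.mp (hB (Θ - x) (Θ - x) φ)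
          calc -B (Θ - x) (Θ - x) φ ≤ C_b * ‖Θ - x‖ * ‖Θ - x‖ * ‖φ‖ := by linarith [hb.1]
            _ ≤ C_b * ‖Θ - x‖ * ‖Θ - x‖ * 1 := by gcongr
            _ = C_b * ‖Θ - x‖ ^ 2 := by ring
        have h3 : |A x φ + B x x φ - L φ| ≤ ε := by
          rw [hε]
          exact le_ciSup hbdd ⟨φ, hφ⟩
        simp only [key]
        linarith
end

section
/- Mapping of ball to ball: let x ∈ V, suppose Ã : (θ,φ) ↦ A(θ,φ) + 2B(x,θ,φ) satisfies the inf-sup condition with constant γ > 0, set ε := sup_{φ∈V, ‖φ‖≤1} |A(x,φ) + B(x,x,φ) − L(φ)|, and assume 4·C_b·ε ≤ γ². If Θ ∈ V satisfies ‖Θ − x‖ ≤ 2ε/γ and μ(Θ) ∈ V satisfies Ã(μ(Θ),φ) = L(φ) + 2B(x,Θ,φ) − B(Θ,Θ,φ) for all φ ∈ V, then ‖μ(Θ) − x‖ ≤ 2ε/γ; that is, μ maps the closed ball of radius 2ε/γ about x into itself. -/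
/-- Mapping of ball to ball: with `Ã(θ,φ) = A(θ,φ) + 2B(x,θ,φ)` satisfying
the inf-sup condition with constant `γ > 0`, `ε = sup_{‖φ‖≤1} |A(x,φ)+B(x,x,φ)−L(φ)|`,
and `4·C_b·ε ≤ γ²`: if `‖Θ − x‖ ≤ 2ε/γ` and `μΘ` satisfies
`Ã(μΘ,φ) = L(φ) + 2B(x,Θ,φ) − B(Θ,Θ,φ)` for all `φ`, then `‖μΘ − x‖ ≤ 2ε/γ`. -/
theorem fixed_point_map_ball_to_ball
    {V : Type*} [NormedAddCommGroup V] [NormedSpace ℝ V]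
    (A : V →ₗ[ℝ] V →ₗ[ℝ] ℝ) (B : V →ₗ[ℝ] V →ₗ[ℝ] V →ₗ[ℝ] ℝ) (L : V →ₗ[ℝ] ℝ)
    (C_A C_b C_L : ℝ) (hCb : 0 < C_b)
    (hA : ∀ x y : V, |A x y| ≤ C_A * ‖x‖ * ‖y‖)
    (hBsymm : ∀ x y z : V, B x y z = B y x z)
    (hB : ∀ x y z : V, |B x y z| ≤ C_b * ‖x‖ * ‖y‖ * ‖z‖)
    (hL : ∀ x : V, |L x| ≤ C_L * ‖x‖)
    (x : V) (γ : ℝ) (hγ : 0 < γ)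
    (hinfsup : ∀ θ : V, γ * ‖θ‖ ≤
      ⨆ φ : {φ : V // ‖φ‖ ≤ 1}, (A θ (φ : V) + 2 * B x θ (φ : V)))
    (ε : ℝ)
    (hε : ε = ⨆ φ : {φ : V // ‖φ‖ ≤ 1},
      |A x (φ : V) + B x x (φ : V) - L (φ : V)|)
    (hsmall : 4 * C_b * ε ≤ γ ^ 2)
    (Θ : V) (hΘ : ‖Θ - x‖ ≤ 2 * ε / γ)
    (μΘ : V)
    (hμ : ∀ φ : V, A μΘ φ + 2 * B x μΘ φ = L φ + 2 * B x Θ φ - B Θ Θ φ) :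
    ‖μΘ - x‖ ≤ 2 * ε / γ := by
  have hne : Nonempty {φ : V // ‖φ‖ ≤ 1} := ⟨⟨0, by simp⟩⟩
  -- boundedness of the residual over the unit ball
  have hbdd : BddAbove (Set.range fun φ : {φ : V // ‖φ‖ ≤ 1} =>
      |A x (φ : V) + B x x (φ : V) - L (φ : V)|) := by
    refine ⟨|C_A| * ‖x‖ + |C_b| * ‖x‖ * ‖x‖ + |C_L|, ?_⟩
    rintro r ⟨⟨φ, hφ⟩, rfl⟩
    have h1 := hA x φ
    have h2 := hB x x φ
    have h3 := hL φ
    have hx0 : (0:ℝ) ≤ ‖x‖ := norm_nonneg x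
    have hφ0 : (0:ℝ) ≤ ‖φ‖ := norm_nonneg φ
    have habs : |A x φ + B x x φ - L φ| ≤ |A x φ| + |B x x φ| + |L φ| := by
      calc |A x φ + B x x φ - L φ| ≤ |A x φ + B x x φ| + |L φ| := abs_sub _ _
        _ ≤ |A x φ| + |B x x φ| + |L φ| := by
            have := abs_add_le (A x φ) (B x x φ); linarith
    have e1 : C_A * ‖x‖ * ‖φ‖ ≤ |C_A| * ‖x‖ := by
      nlinarith [mul_nonneg (mul_nonneg (abs_nonneg C_A) hx0) (sub_nonneg.mpr hφ),
        mul_nonneg (mul_nonneg (sub_nonneg.mpr (le_abs_self C_A)) hx0) hφ0]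
    have e2 : C_b * ‖x‖ * ‖x‖ * ‖φ‖ ≤ |C_b| * ‖x‖ * ‖x‖ := by
      nlinarith [mul_nonneg (mul_nonneg (mul_nonneg (abs_nonneg C_b) hx0) hx0) (sub_nonneg.mpr hφ),
        mul_nonneg (mul_nonneg (mul_nonneg (sub_nonneg.mpr (le_abs_self C_b)) hx0) hx0) hφ0]
    have e3 : C_L * ‖φ‖ ≤ |C_L| := by
      nlinarith [mul_nonneg (abs_nonneg C_L) (sub_nonneg.mpr hφ),
        mul_nonneg (sub_nonneg.mpr (le_abs_self C_L)) hφ0]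
    simp only
    linarith
  have hRle : ∀ φ : {φ : V // ‖φ‖ ≤ 1},
      |A x (φ : V) + B x x (φ : V) - L (φ : V)| ≤ ε := by
    intro φ
    rw [hε]
    exact le_ciSup hbdd φ
  have hεnn : 0 ≤ ε := by
    have := hRle ⟨0, by simp⟩
    simp at this
    linarith [abs_nonneg (A x (0:V) + B x x (0:V) - L (0:V)), hRle ⟨0, by simp⟩]
  set e := μΘ - x with he
  have key : ∀ φ : {φ : V // ‖φ‖ ≤ 1},
      A e (φ : V) + 2 * B x e (φ : V) ≤ ε + C_b * (2 * ε / γ)^2 := by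
    rintro ⟨φ, hφ⟩
    have expand : A e φ + 2 * B x e φ
        = -(A x φ + B x x φ - L φ) - B (Θ - x) (Θ - x) φ := by
      have h1 : A e φ = A μΘ φ - A x φ := by
        rw [he, map_sub]; rfl
      have h2 : B x e φ = B x μΘ φ - B x x φ := by
        rw [he, map_sub]; rfl
      have h3 : B (Θ - x) (Θ - x) φ
          = B Θ Θ φ - B Θ x φ - (B x Θ φ - B x x φ) := by
        rw [map_sub]
        simp only [LinearMap.sub_apply, map_sub]
        linarith [hBsymm Θ x φ]
      have h4 := hBsymm Θ x φ
      have h5 := hμ φ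
      rw [h1, h2, h3]
      linarith
    have hBe := hB (Θ - x) (Θ - x) φ
    have h6 : B (Θ - x) (Θ - x) φ ≥ -(C_b * ‖Θ - x‖ * ‖Θ - x‖ * ‖φ‖) := by
      have := neg_abs_le (B (Θ - x) (Θ - x) φ); linarith
    have hRφ := hRle ⟨φ, hφ⟩
    have hnR : -(A x φ + B x x φ - L φ) ≤ ε := by
      have := neg_abs_le (A x φ + B x x φ - L φ); linarith
    have hnorm : 0 ≤ ‖Θ - x‖ := norm_nonneg _
    have hr : 0 ≤ 2 * ε / γ := by positivity
    have h7 : C_b * ‖Θ - x‖ * ‖Θ - x‖ * ‖φ‖ ≤ C_b * (2 * ε / γ)^2 := by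
      have hnn : ‖Θ - x‖ * ‖Θ - x‖ ≤ (2 * ε / γ) * (2 * ε / γ) :=
        mul_le_mul hΘ hΘ hnorm hr
      have t1 : C_b * (‖Θ - x‖ * ‖Θ - x‖) ≤ C_b * (2 * ε / γ * (2 * ε / γ)) :=
        mul_le_mul_of_nonneg_left hnn hCb.le
      have t2 : C_b * ‖Θ - x‖ * ‖Θ - x‖ * ‖φ‖ ≤ C_b * ‖Θ - x‖ * ‖Θ - x‖ :=
        mul_le_of_le_one_right (by positivity) hφ
      calc C_b * ‖Θ - x‖ * ‖Θ - x‖ * ‖φ‖ ≤ C_b * ‖Θ - x‖ * ‖Θ - x‖ := t2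
        _ = C_b * (‖Θ - x‖ * ‖Θ - x‖) := by ring
        _ ≤ C_b * (2 * ε / γ * (2 * ε / γ)) := t1
        _ = C_b * (2 * ε / γ)^2 := by ring
    rw [expand]
    linarith
  have hsup : γ * ‖e‖ ≤ ε + C_b * (2 * ε / γ)^2 :=
    (hinfsup e).trans (ciSup_le key)
  have hrhs : ε + C_b * (2 * ε / γ)^2 ≤ 2 * ε := by
    have hγ2 : (0:ℝ) < γ^2 := by positivity
    have : C_b * (2 * ε / γ)^2 ≤ ε := by
      rw [div_pow, ← mul_div_assoc, div_le_iff₀ hγ2]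
      nlinarith [mul_le_mul_of_nonneg_left hsmall hεnn]
    linarith
  have hfin : γ * ‖e‖ ≤ 2 * ε := le_trans hsup hrhs
  rw [le_div_iff₀ hγ]
  have hcomm : γ * ‖e‖ = ‖e‖ * γ := mul_comm _ _
  linarith
end

section
/- Contraction estimate for the fixed-point map: let x ∈ V and suppose Ã : (θ,φ) ↦ A(θ,φ) + 2B(x,θ,φ) satisfies the inf-sup condition with constant γ > 0. If Θ, Θ̃ ∈ V and μ(Θ), μ(Θ̃) ∈ V satisfy Ã(μ(Θ),φ) = L(φ) + 2B(x,Θ,φ) − B(Θ,Θ,φ) and Ã(μ(Θ̃),φ) = L(φ) + 2B(x,Θ̃,φ) − B(Θ̃,Θ̃,φ) for all φ ∈ V, then γ·‖μ(Θ) − μ(Θ̃)‖ ≤ C_b·(‖Θ − x‖ + ‖Θ̃ − x‖)·‖Θ − Θ̃‖. -/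
/-- Contraction estimate for the fixed-point map: with
`Ã(θ,φ) = A(θ,φ) + 2B(x,θ,φ)` satisfying the inf-sup condition with constant `γ > 0`,
if `μΘ` and `μΘ'` solve the fixed-point equations for `Θ` and `Θ̃` respectively, then
`γ·‖μ(Θ) − μ(Θ̃)‖ ≤ C_b·(‖Θ − x‖ + ‖Θ̃ − x‖)·‖Θ − Θ̃‖`. -/
theorem fixed_point_map_contraction_estimate
    {V : Type*} [NormedAddCommGroup V] [NormedSpace ℝ V]
    (A : V →ₗ[ℝ] V →ₗ[ℝ] ℝ) (B : V →ₗ[ℝ] V →ₗ[ℝ] V →ₗ[ℝ] ℝ) (L : V →ₗ[ℝ] ℝ)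
    (C_A C_b C_L : ℝ) (hCb : 0 < C_b)
    (hA : ∀ x y : V, |A x y| ≤ C_A * ‖x‖ * ‖y‖)
    (hBsymm : ∀ x y z : V, B x y z = B y x z)
    (hB : ∀ x y z : V, |B x y z| ≤ C_b * ‖x‖ * ‖y‖ * ‖z‖)
    (hL : ∀ x : V, |L x| ≤ C_L * ‖x‖)
    (x : V) (γ : ℝ) (hγ : 0 < γ)
    (hinfsup : ∀ θ : V, γ * ‖θ‖ ≤
      ⨆ φ : {φ : V // ‖φ‖ ≤ 1}, (A θ (φ : V) + 2 * B x θ (φ : V)))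
    (Θ Θ' μΘ μΘ' : V)
    (hμ : ∀ φ : V, A μΘ φ + 2 * B x μΘ φ = L φ + 2 * B x Θ φ - B Θ Θ φ)
    (hμ' : ∀ φ : V, A μΘ' φ + 2 * B x μΘ' φ = L φ + 2 * B x Θ' φ - B Θ' Θ' φ) :
    γ * ‖μΘ - μΘ'‖ ≤ C_b * (‖Θ - x‖ + ‖Θ' - x‖) * ‖Θ - Θ'‖ := by
  have key : ∀ φ : V, A (μΘ - μΘ') φ + 2 * B x (μΘ - μΘ') φ =
      -(B (Θ - x) (Θ - Θ') φ + B (Θ' - x) (Θ - Θ') φ) := by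
    intro φ
    have h1 := hμ φ
    have h2 := hμ' φ
    have hs := hBsymm Θ' Θ φ
    simp only [map_sub, LinearMap.sub_apply] at *
    linarith
  have bound : ∀ φ : V, ‖φ‖ ≤ 1 → A (μΘ - μΘ') φ + 2 * B x (μΘ - μΘ') φ ≤
      C_b * (‖Θ - x‖ + ‖Θ' - x‖) * ‖Θ - Θ'‖ := by
    intro φ hφ
    rw [key φ]
    have b1 := hB (Θ - x) (Θ - Θ') φ
    have b2 := hB (Θ' - x) (Θ - Θ') φ
    have h1 : C_b * ‖Θ - x‖ * ‖Θ - Θ'‖ * ‖φ‖ ≤ C_b * ‖Θ - x‖ * ‖Θ - Θ'‖ :=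
      mul_le_of_le_one_right (by positivity) hφ
    have h2 : C_b * ‖Θ' - x‖ * ‖Θ - Θ'‖ * ‖φ‖ ≤ C_b * ‖Θ' - x‖ * ‖Θ - Θ'‖ :=
      mul_le_of_le_one_right (by positivity) hφ
    have := abs_le.mp b1
    have := abs_le.mp b2
    nlinarith
  calc γ * ‖μΘ - μΘ'‖ ≤ ⨆ φ : {φ : V // ‖φ‖ ≤ 1},
        (A (μΘ - μΘ') (φ : V) + 2 * B x (μΘ - μΘ') (φ : V)) := hinfsup _
    _ ≤ C_b * (‖Θ - x‖ + ‖Θ' - x‖) * ‖Θ - Θ'‖ := by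
        haveI : Nonempty {φ : V // ‖φ‖ ≤ 1} := ⟨⟨0, by simp⟩⟩
        exact ciSup_le fun φ => bound φ φ.2
end

section
/- Existence and local uniqueness of a solution near an approximate solution: let V be a finite-dimensional real normed vector space, let x ∈ V, suppose Ã : (θ,φ) ↦ A(θ,φ) + 2B(x,θ,φ) satisfies the inf-sup condition with constant γ > 0, set ε := sup_{φ∈V, ‖φ‖≤1} |A(x,φ) + B(x,x,φ) − L(φ)|, and assume 4·C_b·ε < γ². Then there exists exactly one w ∈ V with ‖w − x‖ ≤ 2ε/γ satisfying A(w,φ) + B(w,w,φ) = L(φ) for all φ ∈ V. -/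
set_option maxHeartbeats 1000000 in
/-- Existence and local uniqueness of a solution near an approximate
solution: on a finite-dimensional `V`, with `Ã(θ,φ) = A(θ,φ) + 2B(x,θ,φ)` satisfying
the inf-sup condition with constant `γ > 0`,
`ε = sup_{‖φ‖≤1} |A(x,φ)+B(x,x,φ)−L(φ)|` and `4·C_b·ε < γ²`, there is exactly one
`w ∈ V` with `‖w − x‖ ≤ 2ε/γ` such that `A(w,φ) + B(w,w,φ) = L(φ)` for all `φ`. -/
theorem exists_unique_solution_near_approximate
    {V : Type*} [NormedAddCommGroup V] [NormedSpace ℝ V] [FiniteDimensional ℝ V]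
    (A : V →ₗ[ℝ] V →ₗ[ℝ] ℝ) (B : V →ₗ[ℝ] V →ₗ[ℝ] V →ₗ[ℝ] ℝ) (L : V →ₗ[ℝ] ℝ)
    (C_A C_b C_L : ℝ) (hCb : 0 < C_b)
    (hA : ∀ x y : V, |A x y| ≤ C_A * ‖x‖ * ‖y‖)
    (hBsymm : ∀ x y z : V, B x y z = B y x z)
    (hB : ∀ x y z : V, |B x y z| ≤ C_b * ‖x‖ * ‖y‖ * ‖z‖)
    (hL : ∀ x : V, |L x| ≤ C_L * ‖x‖)
    (x : V) (γ : ℝ) (hγ : 0 < γ)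
    (hinfsup : ∀ θ : V, γ * ‖θ‖ ≤
      ⨆ φ : {φ : V // ‖φ‖ ≤ 1}, (A θ (φ : V) + 2 * B x θ (φ : V)))
    (ε : ℝ)
    (hε : ε = ⨆ φ : {φ : V // ‖φ‖ ≤ 1},
      |A x (φ : V) + B x x (φ : V) - L (φ : V)|)
    (hsmall : 4 * C_b * ε < γ ^ 2) :
    ∃! w : V, ‖w - x‖ ≤ 2 * ε / γ ∧ ∀ φ : V, A w φ + B w w φ = L φ := by
  haveI : Nonempty {φ : V // ‖φ‖ ≤ 1} := ⟨⟨0, by simp⟩⟩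
  haveI : CompleteSpace V := FiniteDimensional.complete ℝ V
  -- key consequence of inf-sup
  have key : ∀ (θ : V) (M : ℝ), (∀ φ : V, ‖φ‖ ≤ 1 → A θ φ + 2 * B x θ φ ≤ M) →
      γ * ‖θ‖ ≤ M := fun θ M h => (hinfsup θ).trans (ciSup_le fun φ => h φ φ.2)
  -- bound on residual
  have hRbdd : BddAbove (Set.range fun φ : {φ : V // ‖φ‖ ≤ 1} =>
      |A x (φ : V) + B x x (φ : V) - L (φ : V)|) := by
    refine ⟨|C_A| * ‖x‖ + C_b * ‖x‖ * ‖x‖ + |C_L|, ?_⟩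
    rintro y ⟨φ, rfl⟩
    have h1 := hA x (φ : V)
    have h2 := hB x x (φ : V)
    have h3 := hL (φ : V)
    have hφ : ‖(φ : V)‖ ≤ 1 := φ.2
    have habs : |A x (φ : V) + B x x (φ : V) - L (φ : V)| ≤
        |A x (φ : V)| + |B x x (φ : V)| + |L (φ : V)| := by
      calc |A x (φ : V) + B x x (φ : V) - L (φ : V)|
          ≤ |A x (φ : V) + B x x (φ : V)| + |L (φ : V)| := abs_sub _ _
        _ ≤ |A x (φ : V)| + |B x x (φ : V)| + |L (φ : V)| := by
            have := abs_add_le (A x (φ : V)) (B x x (φ : V)); linarith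
    have hx0 : (0:ℝ) ≤ ‖x‖ := norm_nonneg x
    have hφ0 : (0:ℝ) ≤ ‖(φ : V)‖ := norm_nonneg _
    nlinarith [mul_nonneg (sub_nonneg.mpr (le_abs_self C_A)) (mul_nonneg hx0 hφ0),
      mul_nonneg (mul_nonneg (abs_nonneg C_A) hx0) (sub_nonneg.mpr hφ),
      sub_nonneg.mpr (le_abs_self C_L),
      mul_nonneg (abs_nonneg C_L) (sub_nonneg.mpr hφ),
      mul_nonneg (mul_nonneg (mul_nonneg hCb.le hx0) hx0) (sub_nonneg.mpr hφ)]
  have hRle : ∀ φ : V, ‖φ‖ ≤ 1 → |A x φ + B x x φ - L φ| ≤ ε := by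
    intro φ hφ
    rw [hε]
    exact le_ciSup hRbdd (⟨φ, hφ⟩ : {φ : V // ‖φ‖ ≤ 1})
  have hε0 : (0:ℝ) ≤ ε := le_trans (abs_nonneg _) (hRle 0 (by simp))
  set r : ℝ := 2 * ε / γ with hr
  have hr0 : 0 ≤ r := by positivity
  have hγr : γ * r = 2 * ε := by rw [hr]; field_simp
  have hk : 2 * C_b * r < γ := by
    rw [hr]
    have h1 : 2 * C_b * (2 * ε / γ) = 4 * C_b * ε / γ := by ring
    rw [h1, div_lt_iff₀ hγ]
    nlinarith
  -- the bilinear form Ã as a linear map to the dual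
  set At : V →ₗ[ℝ] V →ₗ[ℝ] ℝ := A + (2:ℝ) • (B x) with hAt
  have hAtapp : ∀ θ φ : V, At θ φ = A θ φ + 2 * B x θ φ := by
    intro θ φ; simp [hAt]
  have hinj : Function.Injective At := by
    rw [← LinearMap.ker_eq_bot, LinearMap.ker_eq_bot']
    intro θ hθ
    have h0 : γ * ‖θ‖ ≤ 0 := key θ 0 (fun φ _ => by
      rw [← hAtapp θ φ, hθ]; simp)
    have h1 := norm_nonneg θ
    have hθ0 : ‖θ‖ = 0 := le_antisymm (by nlinarith) h1
    exact norm_eq_zero.mp hθ0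
  have hsurj : Function.Surjective At :=
    (LinearMap.injective_iff_surjective_of_finrank_eq_finrank
      (Subspace.dual_finrank_eq (K := ℝ) (V := V)).symm).mp hinj
  -- the fixed point map
  set g : V → (V →ₗ[ℝ] ℝ) := fun e => L - A x - B x x - B e e with hg
  have hgapp : ∀ e φ : V, g e φ = L φ - A x φ - B x x φ - B e e φ := by
    intro e φ; simp [hg]
  choose Φ hΦspec using fun e : V => hsurj (g e)
  have hΦeq : ∀ e φ : V, A (Φ e) φ + 2 * B x (Φ e) φ
      = L φ - A x φ - B x x φ - B e e φ := by
    intro e φ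
    rw [← hAtapp, hΦspec e, hgapp]
  -- maps ball into ball
  have hΦball : ∀ e : V, ‖e‖ ≤ r → ‖Φ e‖ ≤ r := by
    intro e he
    have h1 : γ * ‖Φ e‖ ≤ ε + C_b * r ^ 2 := by
      refine key (Φ e) _ (fun φ hφ => ?_)
      rw [hΦeq e φ]
      have h2 := abs_le.mp (hRle φ hφ)
      have h3 := abs_le.mp (hB e e φ)
      have h5 := norm_nonneg e
      have h6 := norm_nonneg φ
      have h4 : C_b * ‖e‖ * ‖e‖ * ‖φ‖ ≤ C_b * r ^ 2 := by
        have t1 : ‖e‖ * ‖φ‖ ≤ r * 1 := mul_le_mul he hφ h6 (le_trans h5 he)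
        have t2 : ‖e‖ * (‖e‖ * ‖φ‖) ≤ r * (r * 1) :=
          mul_le_mul he t1 (mul_nonneg h5 h6) (le_trans h5 he)
        calc C_b * ‖e‖ * ‖e‖ * ‖φ‖ = C_b * (‖e‖ * (‖e‖ * ‖φ‖)) := by ring
          _ ≤ C_b * (r * (r * 1)) := mul_le_mul_of_nonneg_left t2 hCb.le
          _ = C_b * r ^ 2 := by ring
      linarith
    have h5 : ε + C_b * r ^ 2 ≤ γ * r := by
      rw [hγr]
      have h6 : C_b * r ^ 2 ≤ ε := by
        have hγ2 : (0:ℝ) < γ ^ 2 := by positivity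
        have h7 : C_b * r ^ 2 * γ ^ 2 = 4 * C_b * ε ^ 2 := by
          rw [hr]; field_simp; ring
        nlinarith [h7, hγ2, mul_le_mul_of_nonneg_right hsmall.le hε0]
      linarith
    have := le_trans h1 h5
    exact le_of_mul_le_mul_left this hγ
  -- Lipschitz estimate
  have hΦlip : ∀ e e' : V, ‖e‖ ≤ r → ‖e'‖ ≤ r →
      γ * ‖Φ e - Φ e'‖ ≤ 2 * C_b * r * ‖e - e'‖ := by
    intro e e' he he'
    refine key _ _ (fun φ hφ => ?_)
    have hd : A (Φ e - Φ e') φ + 2 * B x (Φ e - Φ e') φ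
        = B e' e' φ - B e e φ := by
      have h1 := hΦeq e φ
      have h2 := hΦeq e' φ
      simp only [map_sub, LinearMap.sub_apply]
      linarith
    have hsplit : B e' e' φ - B e e φ = -(B (e - e') e φ) - B e' (e - e') φ := by
      simp only [map_sub, LinearMap.sub_apply]
      have := hBsymm e' e φ
      linarith
    rw [hd, hsplit]
    have h3 := abs_le.mp (hB (e - e') e φ)
    have h4 := abs_le.mp (hB e' (e - e') φ)
    have hne := norm_nonneg (e - e')
    have hnee := norm_nonneg e
    have hne' := norm_nonneg e'
    have hnφ := norm_nonneg φ
    have m1 : C_b * ‖e - e'‖ * ‖e‖ * ‖φ‖ ≤ C_b * r * ‖e - e'‖ := by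
      have t1 : ‖e‖ * ‖φ‖ ≤ r * 1 := mul_le_mul he hφ hnφ (le_trans hnee he)
      calc C_b * ‖e - e'‖ * ‖e‖ * ‖φ‖ = (C_b * ‖e - e'‖) * (‖e‖ * ‖φ‖) := by ring
        _ ≤ (C_b * ‖e - e'‖) * (r * 1) :=
          mul_le_mul_of_nonneg_left t1 (mul_nonneg hCb.le hne)
        _ = C_b * r * ‖e - e'‖ := by ring
    have m2 : C_b * ‖e'‖ * ‖e - e'‖ * ‖φ‖ ≤ C_b * r * ‖e - e'‖ := by
      have t1 : ‖e'‖ * ‖φ‖ ≤ r * 1 := mul_le_mul he' hφ hnφ (le_trans hne' he')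
      calc C_b * ‖e'‖ * ‖e - e'‖ * ‖φ‖ = (C_b * ‖e - e'‖) * (‖e'‖ * ‖φ‖) := by ring
        _ ≤ (C_b * ‖e - e'‖) * (r * 1) :=
          mul_le_mul_of_nonneg_left t1 (mul_nonneg hCb.le hne)
        _ = C_b * r * ‖e - e'‖ := by ring
    linarith [h3.1, h4.1, m1, m2]
  -- set up the contraction on the closed ball
  set K : Set V := Metric.closedBall (0:V) r with hK
  have hmemK : ∀ e : V, e ∈ K ↔ ‖e‖ ≤ r := fun e => mem_closedBall_zero_iff
  haveI : Nonempty K := ⟨⟨0, (hmemK 0).mpr (by simpa using hr0)⟩⟩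
  haveI : CompleteSpace K := Metric.isClosed_closedBall.completeSpace_coe
  set F : K → K := fun e => ⟨Φ e, (hmemK _).mpr (hΦball e ((hmemK e).mp e.2))⟩ with hF
  have hknn : (0:ℝ) ≤ 2 * C_b * r / γ := by positivity
  set k : NNReal := ⟨2 * C_b * r / γ, hknn⟩ with hkk
  have hcontr : ContractingWith k F := by
    constructor
    · rw [← NNReal.coe_lt_one]
      show 2 * C_b * r / γ < 1
      rw [div_lt_one hγ]; exact hk
    · refine LipschitzWith.of_dist_le_mul (fun a b => ?_)
      have ha := (hmemK _).mp a.2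
      have hb := (hmemK _).mp b.2
      have hlip := hΦlip a b ha hb
      show dist (F a).1 (F b).1 ≤ (k:ℝ) * dist a.1 b.1
      rw [dist_eq_norm, dist_eq_norm]
      show ‖Φ a - Φ b‖ ≤ 2 * C_b * r / γ * ‖(a:V) - b‖
      rw [div_mul_eq_mul_div, le_div_iff₀ hγ]
      linarith
  set e₀ : K := ContractingWith.fixedPoint F hcontr with he₀
  have hfix : F e₀ = e₀ := hcontr.fixedPoint_isFixedPt
  have hfixV : Φ (e₀ : V) = (e₀ : V) := congrArg Subtype.val hfix
  set e : V := (e₀ : V) with he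
  have hwball : ‖x + e - x‖ ≤ r := by simpa using (hmemK e).mp e₀.2
  have hwsol : ∀ φ : V, A (x + e) φ + B (x + e) (x + e) φ = L φ := by
    intro φ
    have h1 := hΦeq e φ
    rw [hfixV] at h1
    have hsym := hBsymm e x φ
    simp only [map_add, LinearMap.add_apply]
    linarith
  refine ⟨x + e, ⟨hwball, hwsol⟩, ?_⟩
  rintro w' ⟨hb', hs'⟩
  have hkey : γ * ‖w' - (x + e)‖ ≤ 2 * C_b * r * ‖w' - (x + e)‖ := by
    refine key _ _ (fun φ hφ => ?_)
    have hval : A (w' - (x + e)) φ + 2 * B x (w' - (x + e)) φ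
        = B (x - w') (w' - (x + e)) φ + B (x - (x + e)) (w' - (x + e)) φ := by
      have h1 := hs' φ
      have h2 := hwsol φ
      have s1 := hBsymm w' (x + e) φ
      simp only [map_sub, map_add, LinearMap.sub_apply, LinearMap.add_apply] at *
      linarith
    rw [hval]
    have b1 := abs_le.mp (hB (x - w') (w' - (x + e)) φ)
    have b2 := abs_le.mp (hB (x - (x + e)) (w' - (x + e)) φ)
    have n1 : ‖x - w'‖ ≤ r := by rw [norm_sub_rev]; exact hb'
    have n2 : ‖x - (x + e)‖ ≤ r := by rw [norm_sub_rev]; exact hwball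
    have hd0 := norm_nonneg (w' - (x + e))
    have hφ0 := norm_nonneg φ
    have m1 : ‖x - w'‖ ≥ 0 := norm_nonneg _
    have m2 : ‖x - (x + e)‖ ≥ 0 := norm_nonneg _
    have q1 : C_b * ‖x - w'‖ * ‖w' - (x + e)‖ * ‖φ‖ ≤ C_b * r * ‖w' - (x + e)‖ := by
      have t1 : ‖x - w'‖ * ‖φ‖ ≤ r * 1 := mul_le_mul n1 hφ hφ0 (le_trans m1 n1)
      calc C_b * ‖x - w'‖ * ‖w' - (x + e)‖ * ‖φ‖
          = (C_b * ‖w' - (x + e)‖) * (‖x - w'‖ * ‖φ‖) := by ring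
        _ ≤ (C_b * ‖w' - (x + e)‖) * (r * 1) :=
          mul_le_mul_of_nonneg_left t1 (mul_nonneg hCb.le hd0)
        _ = C_b * r * ‖w' - (x + e)‖ := by ring
    have q2 : C_b * ‖x - (x + e)‖ * ‖w' - (x + e)‖ * ‖φ‖ ≤ C_b * r * ‖w' - (x + e)‖ := by
      have t1 : ‖x - (x + e)‖ * ‖φ‖ ≤ r * 1 := mul_le_mul n2 hφ hφ0 (le_trans m2 n2)
      calc C_b * ‖x - (x + e)‖ * ‖w' - (x + e)‖ * ‖φ‖
          = (C_b * ‖w' - (x + e)‖) * (‖x - (x + e)‖ * ‖φ‖) := by ring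
        _ ≤ (C_b * ‖w' - (x + e)‖) * (r * 1) :=
          mul_le_mul_of_nonneg_left t1 (mul_nonneg hCb.le hd0)
        _ = C_b * r * ‖w' - (x + e)‖ := by ring
    linarith [b1.1, b2.1, b1.2, b2.2, q1, q2]
  have hd0 : ‖w' - (x + e)‖ = 0 := by
    by_contra hne
    have hpos : 0 < ‖w' - (x + e)‖ := lt_of_le_of_ne (norm_nonneg _) (Ne.symm hne)
    nlinarith
  have := sub_eq_zero.mp (norm_eq_zero.mp hd0)
  exact this
end

section
/- Quadratic error reduction of one Newton step: let w ∈ V satisfy A(w,φ) + B(w,w,φ) = L(φ) for all φ ∈ V, let z ∈ V be such that the bilinear form (θ,φ) ↦ A(θ,φ) + 2B(z,θ,φ) satisfies the inf-sup condition with constant γ' > 0, and let w⁺ ∈ V satisfy the Newton equation A(w⁺,φ) + 2B(z,w⁺,φ) = B(z,z,φ) + L(φ) for all φ ∈ V. Then γ'·‖w − w⁺‖ ≤ C_b·‖w − z‖². -/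
/-- Quadratic error reduction of one Newton step: if `w` solves
`A(w,φ) + B(w,w,φ) = L(φ)` for all `φ`, the form `(θ,φ) ↦ A(θ,φ) + 2B(z,θ,φ)`
satisfies the inf-sup condition with constant `γ' > 0`, and `w⁺` solves the Newton
equation `A(w⁺,φ) + 2B(z,w⁺,φ) = B(z,z,φ) + L(φ)` for all `φ`, then
`γ'·‖w − w⁺‖ ≤ C_b·‖w − z‖²`. -/
theorem newton_step_quadratic_error_reduction
    {V : Type*} [NormedAddCommGroup V] [NormedSpace ℝ V]
    (A : V →ₗ[ℝ] V →ₗ[ℝ] ℝ) (B : V →ₗ[ℝ] V →ₗ[ℝ] V →ₗ[ℝ] ℝ) (L : V →ₗ[ℝ] ℝ)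
    (C_A C_b C_L : ℝ) (hCb : 0 < C_b)
    (hA : ∀ x y : V, |A x y| ≤ C_A * ‖x‖ * ‖y‖)
    (hBsymm : ∀ x y z : V, B x y z = B y x z)
    (hB : ∀ x y z : V, |B x y z| ≤ C_b * ‖x‖ * ‖y‖ * ‖z‖)
    (hL : ∀ x : V, |L x| ≤ C_L * ‖x‖)
    (w : V) (hw : ∀ φ : V, A w φ + B w w φ = L φ)
    (z : V) (γ' : ℝ) (hγ' : 0 < γ')
    (hinfsup : ∀ θ : V, γ' * ‖θ‖ ≤
      ⨆ φ : {φ : V // ‖φ‖ ≤ 1}, (A θ (φ : V) + 2 * B z θ (φ : V)))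
    (wplus : V)
    (hnewton : ∀ φ : V, A wplus φ + 2 * B z wplus φ = B z z φ + L φ) :
    γ' * ‖w - wplus‖ ≤ C_b * ‖w - z‖ ^ 2 := by
  have key : ∀ φ : V, A (w - wplus) φ + 2 * B z (w - wplus) φ
      = -(B (w - z) (w - z) φ) := by
    intro φ
    have h1 := hw φ
    have h2 := hnewton φ
    have hs := hBsymm w z φ
    simp only [map_sub, LinearMap.sub_apply] at *
    linarith
  have hbound : (⨆ φ : {φ : V // ‖φ‖ ≤ 1},
      (A (w - wplus) (φ : V) + 2 * B z (w - wplus) (φ : V))) ≤ C_b * ‖w - z‖ ^ 2 := by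
    apply Real.iSup_le
    · rintro ⟨φ, hφ⟩
      rw [key φ]
      have h := hB (w - z) (w - z) φ
      have h2 : C_b * ‖w - z‖ * ‖w - z‖ * ‖φ‖ ≤ C_b * ‖w - z‖ ^ 2 := by
        have : C_b * ‖w - z‖ * ‖w - z‖ * ‖φ‖ ≤ C_b * ‖w - z‖ * ‖w - z‖ * 1 :=
          mul_le_mul_of_nonneg_left hφ (by positivity)
        nlinarith
      calc -(B (w - z) (w - z) φ) ≤ |B (w - z) (w - z) φ| := neg_le_abs _
        _ ≤ C_b * ‖w - z‖ * ‖w - z‖ * ‖φ‖ := h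
        _ ≤ C_b * ‖w - z‖ ^ 2 := h2
    · positivity
  exact le_trans (hinfsup (w - wplus)) hbound
end

section
/- Local quadratic convergence of the Newton method: let V be a finite-dimensional real normed vector space, let w ∈ V satisfy A(w,φ) + B(w,w,φ) = L(φ) for all φ ∈ V, and suppose the bilinear form (θ,φ) ↦ A(θ,φ) + 2B(w,θ,φ) satisfies the inf-sup condition with constant γ > 0. Set R := γ/(8·C_b). Then for every initial guess w₀ ∈ V with ‖w − w₀‖ ≤ R there exists a sequence (w_j)_{j≥1} in V such that for each j ≥ 1 the Newton equation A(w_j,φ) + 2B(w_{j−1},w_j,φ) = B(w_{j−1},w_{j−1},φ) + L(φ) holds for all φ ∈ V, and every such sequence satisfies ‖w − w_j‖ ≤ R, ‖w − w_j‖ ≤ (2·C_b/γ)·‖w − w_{j−1}‖² ≤ (1/4)·‖w − w_{j−1}‖ for all j ≥ 1; in particular w_j converges to w. -/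
set_option maxHeartbeats 2000000 in
/-- Local quadratic convergence of the Newton method: on a
finite-dimensional `V`, with `w` a solution of `A(w,φ) + B(w,w,φ) = L(φ)` and the
linearized form `(θ,φ) ↦ A(θ,φ) + 2B(w,θ,φ)` satisfying the inf-sup condition with
constant `γ > 0`, set `R = γ/(8·C_b)`. For every initial guess `w₀` with
`‖w − w₀‖ ≤ R`, a Newton sequence exists, and every Newton sequence stays in the ball
of radius `R`, contracts quadratically with constant `2·C_b/γ` (hence by the factor
`1/4` per step), and converges to `w`. -/
theorem newton_method_local_quadratic_convergence
    {V : Type*} [NormedAddCommGroup V] [NormedSpace ℝ V] [FiniteDimensional ℝ V]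
    (A : V →ₗ[ℝ] V →ₗ[ℝ] ℝ) (B : V →ₗ[ℝ] V →ₗ[ℝ] V →ₗ[ℝ] ℝ) (L : V →ₗ[ℝ] ℝ)
    (C_A C_b C_L : ℝ) (hCb : 0 < C_b)
    (hA : ∀ x y : V, |A x y| ≤ C_A * ‖x‖ * ‖y‖)
    (hBsymm : ∀ x y z : V, B x y z = B y x z)
    (hB : ∀ x y z : V, |B x y z| ≤ C_b * ‖x‖ * ‖y‖ * ‖z‖)
    (hL : ∀ x : V, |L x| ≤ C_L * ‖x‖)
    (w : V) (hw : ∀ φ : V, A w φ + B w w φ = L φ)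
    (γ : ℝ) (hγ : 0 < γ)
    (hinfsup : ∀ θ : V, γ * ‖θ‖ ≤
      ⨆ φ : {φ : V // ‖φ‖ ≤ 1}, (A θ (φ : V) + 2 * B w θ (φ : V)))
    (R : ℝ) (hR : R = γ / (8 * C_b))
    (w₀ : V) (hw₀ : ‖w - w₀‖ ≤ R) :
    (∃ ws : ℕ → V, ws 0 = w₀ ∧ ∀ j : ℕ, ∀ φ : V,
        A (ws (j + 1)) φ + 2 * B (ws j) (ws (j + 1)) φ
          = B (ws j) (ws j) φ + L φ) ∧
    (∀ ws : ℕ → V, ws 0 = w₀ →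
      (∀ j : ℕ, ∀ φ : V,
        A (ws (j + 1)) φ + 2 * B (ws j) (ws (j + 1)) φ
          = B (ws j) (ws j) φ + L φ) →
      (∀ j : ℕ,
        ‖w - ws (j + 1)‖ ≤ R ∧
        ‖w - ws (j + 1)‖ ≤ (2 * C_b / γ) * ‖w - ws j‖ ^ 2 ∧
        (2 * C_b / γ) * ‖w - ws j‖ ^ 2 ≤ (1 / 4) * ‖w - ws j‖) ∧
      Filter.Tendsto ws Filter.atTop (nhds w)) := by
  haveI : Nonempty {φ : V // ‖φ‖ ≤ 1} := ⟨⟨0, by simp⟩⟩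
  have hR0 : 0 < R := hR ▸ div_pos hγ (by positivity)
  have hRCb : 2 * C_b * R = γ / 4 := by rw [hR]; field_simp; ring
  have hsup : ∀ (θ : V) (M : ℝ), (∀ φ : V, ‖φ‖ ≤ 1 → A θ φ + 2 * B w θ φ ≤ M) →
      γ * ‖θ‖ ≤ M := fun θ M hM =>
    (hinfsup θ).trans (ciSup_le fun φ => hM φ.1 φ.2)
  -- the error identity
  have hNid : ∀ u x : V, (∀ φ, A x φ + 2 * B u x φ = B u u φ + L φ) →
      ∀ φ : V, A (w - x) φ + 2 * B w (w - x) φ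
        = -(B (w - u) (w - u) φ) + 2 * B (w - u) (w - x) φ := by
    intro u x hx φ
    have h1 := hw φ
    have h2 := hx φ
    have h3 := hBsymm w u φ
    simp only [map_sub, LinearMap.sub_apply] at *
    linarith
  -- one-step estimates
  have hstep : ∀ u x : V, ‖w - u‖ ≤ R →
      (∀ φ, A x φ + 2 * B u x φ = B u u φ + L φ) →
      ‖w - x‖ ≤ (2 * C_b / γ) * ‖w - u‖ ^ 2 ∧
      (2 * C_b / γ) * ‖w - u‖ ^ 2 ≤ (1 / 4) * ‖w - u‖ ∧ ‖w - x‖ ≤ R := by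
    intro u x hu hx
    set a := ‖w - u‖ with ha'
    set b := ‖w - x‖ with hb'
    have ha : 0 ≤ a := norm_nonneg _
    have hb : 0 ≤ b := norm_nonneg _
    have key : γ * b ≤ C_b * a ^ 2 + 2 * C_b * a * b := by
      apply hsup
      intro φ hφ
      rw [hNid u x hx φ]
      have h1 := abs_le.mp (hB (w - u) (w - u) φ)
      have h2 := abs_le.mp (hB (w - u) (w - x) φ)
      nlinarith [norm_nonneg φ, mul_nonneg (mul_nonneg hCb.le ha) ha,
        mul_nonneg (mul_nonneg hCb.le ha) hb]
    have haR : 2 * C_b * a ≤ γ / 4 := by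
      rw [← hRCb]; nlinarith
    have hquad : b ≤ (2 * C_b / γ) * a ^ 2 := by
      rw [div_mul_eq_mul_div, le_div_iff₀ hγ]
      nlinarith
    have h4 : 2 * C_b / γ * a ≤ 1 / 4 := by
      rw [div_mul_eq_mul_div, div_le_iff₀ hγ]
      nlinarith
    have hquart : (2 * C_b / γ) * a ^ 2 ≤ (1 / 4) * a := by nlinarith
    exact ⟨hquad, hquart, by nlinarith⟩
  -- existence of a Newton step
  have hex : ∀ u : V, ‖w - u‖ ≤ R →
      ∃ x : V, ∀ φ, A x φ + 2 * B u x φ = B u u φ + L φ := by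
    intro u hu
    set T : V →ₗ[ℝ] (V →ₗ[ℝ] ℝ) := A + (2 : ℝ) • (B u) with hT
    have hTapp : ∀ x φ : V, T x φ = A x φ + 2 * B u x φ := by
      intro x φ
      simp [hT, smul_eq_mul]
    have hinj : Function.Injective T := by
      rw [injective_iff_map_eq_zero]
      intro x hx0
      have h0 : ∀ φ : V, A x φ + 2 * B u x φ = 0 := by
        intro φ
        have := LinearMap.congr_fun hx0 φ
        rwa [hTapp] at this
      have hb : γ * ‖x‖ ≤ 2 * C_b * ‖w - u‖ * ‖x‖ := by
        apply hsup
        intro φ hφ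
        have hid : A x φ + 2 * B w x φ = 2 * B (w - u) x φ := by
          have := h0 φ
          simp only [map_sub, LinearMap.sub_apply]
          linarith
        rw [hid]
        have h2 := abs_le.mp (hB (w - u) x φ)
        nlinarith [norm_nonneg φ, mul_nonneg (mul_nonneg hCb.le (norm_nonneg (w - u)))
          (norm_nonneg x)]
      have hxle : 2 * C_b * ‖w - u‖ ≤ γ / 4 := by
        rw [← hRCb]; nlinarith [norm_nonneg (w - u)]
      have : ‖x‖ = 0 := by nlinarith [norm_nonneg x]
      exact norm_eq_zero.mp this
    have hsurj : Function.Surjective T :=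
      (LinearMap.injective_iff_surjective_of_finrank_eq_finrank
        Subspace.dual_finrank_eq.symm).mp hinj
    obtain ⟨x, hx⟩ := hsurj (B u u + L)
    refine ⟨x, fun φ => ?_⟩
    have := LinearMap.congr_fun hx φ
    rw [hTapp] at this
    simpa using this
  have hball : ∀ u x : V, ‖w - u‖ ≤ R →
      (∀ φ, A x φ + 2 * B u x φ = B u u φ + L φ) → ‖w - x‖ ≤ R :=
    fun u x hu hx => (hstep u x hu hx).2.2
  constructor
  · -- existence of the sequence
    let g : {u : V // ‖w - u‖ ≤ R} → {u : V // ‖w - u‖ ≤ R} := fun u =>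
      ⟨Classical.choose (hex u.1 u.2),
        hball u.1 _ u.2 (Classical.choose_spec (hex u.1 u.2))⟩
    refine ⟨fun n => (g^[n] ⟨w₀, hw₀⟩ : {u : V // ‖w - u‖ ≤ R}).1, by simp, ?_⟩
    intro j φ
    have hit : g^[j + 1] ⟨w₀, hw₀⟩ = g (g^[j] ⟨w₀, hw₀⟩) :=
      Function.iterate_succ_apply' g j _
    simp only [hit]
    exact Classical.choose_spec (hex _ (g^[j] ⟨w₀, hw₀⟩).2) φ
  · intro ws hws0 hN
    have hinv : ∀ j, ‖w - ws j‖ ≤ R := by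
      intro j
      induction j with
      | zero => rw [hws0]; exact hw₀
      | succ j ih => exact hball _ _ ih (hN j)
    refine ⟨fun j => ?_, ?_⟩
    · obtain ⟨h1, h2, h3⟩ := hstep (ws j) (ws (j + 1)) (hinv j) (hN j)
      exact ⟨h3, h1, h2⟩
    · have hdec : ∀ j, ‖w - ws j‖ ≤ (1 / 4 : ℝ) ^ j * R := by
        intro j
        induction j with
        | zero => simpa using hinv 0
        | succ j ih =>
          obtain ⟨h1, h2, _⟩ := hstep (ws j) (ws (j + 1)) (hinv j) (hN j)
          calc ‖w - ws (j + 1)‖ ≤ (1 / 4) * ‖w - ws j‖ := h1.trans h2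
            _ ≤ (1 / 4) * ((1 / 4 : ℝ) ^ j * R) := by linarith
            _ = (1 / 4 : ℝ) ^ (j + 1) * R := by ring
      rw [tendsto_iff_norm_sub_tendsto_zero]
      have hT4 : Filter.Tendsto (fun j : ℕ => (1 / 4 : ℝ) ^ j * R) Filter.atTop (nhds 0) := by
        have h := (tendsto_pow_atTop_nhds_zero_of_lt_one (by norm_num : (0:ℝ) ≤ 1/4)
          (by norm_num : (1/4 : ℝ) < 1)).mul_const R
        rwa [zero_mul] at h
      exact squeeze_zero (g := fun j => (1 / 4 : ℝ) ^ j * R) (fun j => norm_nonneg _)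
        (fun j => by rw [norm_sub_rev]; exact hdec j) hT4
end
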